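/- Let A = Γ + iW where Γ is a real rate matrix (column sums zero) and W is real diagonal, and let y(0) be a probability vector. Then |∑_j [e^{At} y(0)]_j| ≤ 1 for all t ≥ 0; i.e., the decoherence function has modulus at most 1. -/

import Mathlib

open Matrix Finset

namespace DecoherenceAux

open NormedSpace

set_option maxHeartbeats 2000000

lemma abs_one_add_mul_le {h x y : ℝ} (hh : 0 ≤ h) (hx : (1:ℝ)/2 ≤ 1 + h * x) :
    ‖1 + (h:ℂ) * ((x:ℂ) + (y:ℂ) * Complex.I)‖ ≤ 1 + h * x + h^2 * y^2 := by
  have hr : ‖1 + (h:ℂ) * ((x:ℂ) + (y:ℂ) * Complex.I)‖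
      = Real.sqrt ((1 + h*x)^2 + (h*y)^2) := by
    rw [Complex.norm_def]
    congr 1
    simp [Complex.normSq_apply]
    ring
  rw [hr]
  have h2 : (1 + h*x)^2 + (h*y)^2 ≤ (1 + h*x + h^2*y^2)^2 := by
    nlinarith [sq_nonneg (h*y), sq_nonneg (h^2*y^2)]
  calc Real.sqrt ((1 + h*x)^2 + (h*y)^2) ≤ Real.sqrt ((1 + h*x + h^2*y^2)^2) :=
        Real.sqrt_le_sqrt h2
    _ = 1 + h*x + h^2*y^2 := Real.sqrt_sq (by nlinarith [sq_nonneg (h*y)])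

lemma key {M : ℕ} (B : Matrix (Fin M) (Fin M) ℂ)
    (hoff : ∀ i j, i ≠ j → (B i j).im = 0 ∧ 0 ≤ (B i j).re)
    (hrow : ∀ i, ∑ j, (B i j).re = 0) (i : Fin M) :
    ∑ j, ‖(exp B) i j‖ ≤ 1 := by
  letI : SeminormedRing (Matrix (Fin M) (Fin M) ℂ) := Matrix.linftyOpSemiNormedRing
  letI : NormedRing (Matrix (Fin M) (Fin M) ℂ) := Matrix.linftyOpNormedRing
  letI : NormedAlgebra ℂ (Matrix (Fin M) (Fin M) ℂ) := Matrix.linftyOpNormedAlgebra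
  -- row sums are bounded by the norm
  have rowle : ∀ (X : Matrix (Fin M) (Fin M) ℂ) (k : Fin M),
      ∑ j, ‖X k j‖ ≤ ‖X‖ := by
    intro X k
    rw [Matrix.linfty_opNorm_def]
    have : (∑ j, ‖X k j‖₊) ≤ (Finset.univ.sup fun k : Fin M => ∑ j, ‖X k j‖₊) :=
      Finset.le_sup (f := fun k : Fin M => ∑ j, ‖X k j‖₊) (Finset.mem_univ k)
    calc ∑ j, ‖X k j‖ = ((∑ j, ‖X k j‖₊ : NNReal) : ℝ) := by
          rw [NNReal.coe_sum]; rfl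
      _ ≤ _ := NNReal.coe_le_coe.mpr this
  have normle : ∀ (X : Matrix (Fin M) (Fin M) ℂ) (c : ℝ), 0 ≤ c →
      (∀ k, ∑ j, ‖X k j‖ ≤ c) → ‖X‖ ≤ c := by
    intro X c hc h
    rw [Matrix.linfty_opNorm_def, ← Real.coe_toNNReal c hc, NNReal.coe_le_coe]
    refine Finset.sup_le fun k _ => ?_
    rw [← NNReal.coe_le_coe, NNReal.coe_sum, Real.coe_toNNReal _ hc]
    exact h k
  set a : ℝ := ‖B‖ with ha
  have ha0 : 0 ≤ a := norm_nonneg B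
  set C : ℝ := (∑ k, (B k k).im^2) + 3*(a+1)^2 with hC
  have hC0 : 0 ≤ C := by positivity
  have hBd : ∀ k, ‖B k k‖ ≤ a := by
    intro k
    refine le_trans ?_ (rowle B k)
    exact Finset.single_le_sum (f := fun j => ‖B k j‖)
      (fun _ _ => norm_nonneg _) (Finset.mem_univ k)
  have claim1 : ∀ h : ℝ, 0 ≤ h → h * (a+1) ≤ 1/2 →
      ‖exp ((h:ℂ) • B)‖ ≤ 1 + C * h^2 := by
    intro h hh hha
    have hha' : h * a ≤ 1/2 := le_trans (by nlinarith) hha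
    -- bound ‖1 + h • B‖
    have hone : ‖(1 : Matrix (Fin M) (Fin M) ℂ) + (h:ℂ) • B‖
        ≤ 1 + (∑ k, (B k k).im^2) * h^2 := by
      refine normle _ _ (by positivity) fun k => ?_
      have hsplit : ∑ j, ‖((1 : Matrix (Fin M) (Fin M) ℂ) + (h:ℂ) • B) k j‖
          = ‖1 + (h:ℂ) * B k k‖
            + ∑ j ∈ Finset.univ.erase k, (h * (B k j).re) := by
        rw [← Finset.add_sum_erase _ _ (Finset.mem_univ k)]
        congr 1
        · simp [Matrix.add_apply, Matrix.one_apply, Matrix.smul_apply, smul_eq_mul]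
        · refine Finset.sum_congr rfl fun j hj => ?_
          have hjk : j ≠ k := Finset.ne_of_mem_erase hj
          have him : (B k j).im = 0 := (hoff k j (Ne.symm hjk)).1
          have hre : 0 ≤ (B k j).re := (hoff k j (Ne.symm hjk)).2
          have hB : B k j = ((B k j).re : ℂ) := by
            rw [Complex.ext_iff]; simp [him]
          simp only [Matrix.add_apply, Matrix.one_apply, Matrix.smul_apply, smul_eq_mul,
            if_neg (Ne.symm hjk), zero_add]
          conv_lhs => rw [hB, ← Complex.ofReal_mul]
          rw [Complex.norm_real, Real.norm_eq_abs, abs_of_nonneg (by positivity)]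
      rw [hsplit]
      have hrk : ∑ j ∈ Finset.univ.erase k, (h * (B k j).re)
          = - (h * (B k k).re) := by
        rw [← Finset.mul_sum]
        have : ∑ j ∈ Finset.univ.erase k, (B k j).re
            = (∑ j, (B k j).re) - (B k k).re := by
          rw [← Finset.add_sum_erase _ _ (Finset.mem_univ k)]; ring
        rw [this, hrow k]; ring
      rw [hrk]
      have hrea : |(B k k).re| ≤ a := le_trans (Complex.abs_re_le_norm _) (hBd k)
      have hx : (1:ℝ)/2 ≤ 1 + h * (B k k).re := by
        have hm := mul_le_mul_of_nonneg_left (abs_le.mp hrea).1 hh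
        nlinarith
      have habs1 : ‖1 + (h:ℂ) * B k k‖
          ≤ 1 + h * (B k k).re + h^2 * (B k k).im^2 := by
        have := abs_one_add_mul_le (x := (B k k).re) (y := (B k k).im) hh hx
        rwa [Complex.re_add_im] at this
      have him2 : (B k k).im^2 ≤ ∑ l, (B l l).im^2 :=
        Finset.single_le_sum (f := fun l => (B l l).im^2)
          (fun _ _ => sq_nonneg _) (Finset.mem_univ k)
      nlinarith
    -- tail bound
    set X : Matrix (Fin M) (Fin M) ℂ := (h:ℂ) • B with hXdef
    have hXn : ‖X‖ = h * a := by
      rw [hXdef, norm_smul, Complex.norm_real, Real.norm_of_nonneg hh]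
    have hs : Summable (fun n : ℕ => ((n.factorial : ℂ))⁻¹ • X ^ n) := by
      have := expSeries_summable' (𝕂 := ℂ) X
      exact this
    have hs1 : Summable (fun n : ℕ => (((n+1).factorial : ℂ))⁻¹ • X ^ (n+1)) :=
      ((summable_nat_add_iff 1).mpr hs)
    have hs2 : Summable (fun n : ℕ => (((n+2).factorial : ℂ))⁻¹ • X ^ (n+2)) :=
      ((summable_nat_add_iff 2).mpr hs)
    have hX : exp X = ∑' n : ℕ, ((n.factorial : ℂ))⁻¹ • X ^ n := by
      rw [exp_eq_tsum ℂ]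
    have hsplit : (∑' n : ℕ, ((n.factorial : ℂ))⁻¹ • X ^ n)
        = 1 + X + ∑' n : ℕ, (((n+2).factorial : ℂ))⁻¹ • X ^ (n+2) := by
      rw [Summable.tsum_eq_zero_add hs]
      rw [Summable.tsum_eq_zero_add hs1]
      simp [add_assoc]
    have htail : ‖exp X - 1 - X‖ ≤ (h*a)^2 * Real.exp (h*a) := by
      have hEeq : exp X - 1 - X = ∑' n : ℕ, (((n+2).factorial : ℂ))⁻¹ • X ^ (n+2) := by
        rw [hX, hsplit]; abel
      rw [hEeq]
      have hns : Summable fun n : ℕ => ‖(((n+2).factorial : ℂ))⁻¹ • X ^ (n+2)‖ := by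
        have := norm_expSeries_summable' (𝕂 := ℂ) X
        have h2 := (summable_nat_add_iff (f := fun n => ‖((n.factorial : ℂ))⁻¹ • X ^ n‖) 2).mpr
          (by simpa using this)
        simpa using h2
      have hgs : Summable fun n : ℕ => (h*a)^2 * ((h*a)^n / (n.factorial : ℝ)) :=
        (Real.summable_pow_div_factorial (h*a)).mul_left _
      have hterm : ∀ n : ℕ, ‖(((n+2).factorial : ℂ))⁻¹ • X ^ (n+2)‖
          ≤ (h*a)^2 * ((h*a)^n / (n.factorial : ℝ)) := by
        intro n
        rw [norm_smul]
        have h1 : ‖(((n+2).factorial : ℂ))⁻¹‖ = (((n+2).factorial : ℝ))⁻¹ := by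
          rw [norm_inv]; norm_num
        have h2 : ‖X ^ (n+2)‖ ≤ ‖X‖ ^ (n+2) := norm_pow_le' X (by omega)
        have h3 : ((n.factorial : ℝ))⁻¹ ≥ (((n+2).factorial : ℝ))⁻¹ := by
          apply inv_anti₀
          · exact_mod_cast Nat.factorial_pos n
          · exact_mod_cast Nat.factorial_le (by omega)
        have h4 : (0:ℝ) < (n.factorial : ℝ) := by exact_mod_cast Nat.factorial_pos n
        calc ‖(((n+2).factorial : ℂ))⁻¹‖ * ‖X ^ (n+2)‖
            ≤ (((n+2).factorial : ℝ))⁻¹ * ‖X‖ ^ (n+2) := by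
              rw [h1]
              exact mul_le_mul_of_nonneg_left h2 (by positivity)
          _ ≤ ((n.factorial : ℝ))⁻¹ * ‖X‖ ^ (n+2) := by
              exact mul_le_mul_of_nonneg_right h3 (by positivity)
          _ = (h*a)^2 * ((h*a)^n / (n.factorial : ℝ)) := by
              rw [hXn]; ring
      calc ‖∑' n : ℕ, (((n+2).factorial : ℂ))⁻¹ • X ^ (n+2)‖
          ≤ ∑' n : ℕ, ‖(((n+2).factorial : ℂ))⁻¹ • X ^ (n+2)‖ := norm_tsum_le_tsum_norm hns
        _ ≤ ∑' n : ℕ, (h*a)^2 * ((h*a)^n / (n.factorial : ℝ)) := Summable.tsum_le_tsum hterm hns hgs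
        _ = (h*a)^2 * ∑' n : ℕ, ((h*a)^n / (n.factorial : ℝ)) := tsum_mul_left
        _ = (h*a)^2 * Real.exp (h*a) := by
            congr 1
            rw [Real.exp_eq_exp_ℝ, exp_eq_tsum_div]
    -- combine
    have hcomb : ‖exp X‖ ≤ ‖(1 : Matrix (Fin M) (Fin M) ℂ) + X‖
        + ‖exp X - 1 - X‖ := by
      have : exp X = ((1 : Matrix (Fin M) (Fin M) ℂ) + X) + (exp X - 1 - X) := by abel
      calc ‖exp X‖ = ‖((1 : Matrix (Fin M) (Fin M) ℂ) + X) + (exp X - 1 - X)‖ := by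
            rw [← this]
        _ ≤ _ := norm_add_le _ _
    have hexp3 : Real.exp (h*a) ≤ 3 := by
      calc Real.exp (h*a) ≤ Real.exp 1 := Real.exp_le_exp.mpr (by nlinarith)
        _ ≤ 3 := by
          have := Real.exp_one_lt_d9
          nlinarith
    calc ‖exp X‖ ≤ ‖(1 : Matrix (Fin M) (Fin M) ℂ) + X‖ + ‖exp X - 1 - X‖ := hcomb
      _ ≤ (1 + (∑ k, (B k k).im^2) * h^2) + (h*a)^2 * Real.exp (h*a) := by
          exact add_le_add hone htail
      _ ≤ 1 + C * h^2 := by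
          rw [hC]
          nlinarith [sq_nonneg h, sq_nonneg (h*a), mul_nonneg (mul_nonneg hh hh) ha0,
            sq_nonneg a]
  -- limiting argument
  have claim2 : ∀ n : ℕ, 1 ≤ n → ((n:ℝ))⁻¹ * (a+1) ≤ 1/2 →
      ‖exp B‖ ≤ Real.exp (C * (n:ℝ)⁻¹) := by
    intro n hn hsmall
    have hn0 : (0:ℝ) < (n:ℝ) := by exact_mod_cast hn
    set h : ℝ := ((n:ℝ))⁻¹ with hhdef
    have hh0 : 0 ≤ h := by positivity
    have hrec : B = n • ((h:ℂ) • B) := by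
      rw [← Nat.cast_smul_eq_nsmul ℂ n ((h:ℂ) • B), smul_smul]
      have : ((n:ℂ)) * (h:ℂ) = 1 := by
        rw [hhdef]
        push_cast
        rw [mul_inv_cancel₀]
        exact_mod_cast ne_of_gt hn0
      rw [this, one_smul]
    have hpow : exp B = (exp ((h:ℂ) • B)) ^ n := by
      conv_lhs => rw [hrec]
      exact Matrix.exp_nsmul n _
    have hb1 : ‖exp ((h:ℂ) • B)‖ ≤ 1 + C * h^2 :=
      claim1 h hh0 hsmall
    have hnn : ‖(exp ((h:ℂ) • B)) ^ n‖ ≤ (1 + C * h^2) ^ n := by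
      calc ‖(exp ((h:ℂ) • B)) ^ n‖ ≤ ‖exp ((h:ℂ) • B)‖ ^ n :=
            norm_pow_le' _ (by omega)
        _ ≤ (1 + C * h^2) ^ n := pow_le_pow_left₀ (norm_nonneg _) hb1 n
    have hee : (1 + C * h^2) ^ n ≤ Real.exp (C * h) := by
      have h1 : 1 + C * h^2 ≤ Real.exp (C * h^2) := by
        have := Real.add_one_le_exp (C * h^2)
        linarith
      calc (1 + C * h^2) ^ n ≤ (Real.exp (C * h^2)) ^ n :=
            pow_le_pow_left₀ (by positivity) h1 n
        _ = Real.exp (n * (C * h^2)) := by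
            rw [← Real.exp_nat_mul]
        _ = Real.exp (C * h) := by
            congr 1
            have : (n:ℝ) * h = 1 := by
              rw [hhdef, mul_inv_cancel₀ (ne_of_gt hn0)]
            calc (n:ℝ) * (C * h^2) = C * h * ((n:ℝ) * h) := by ring
              _ = C * h := by rw [this, mul_one]
    calc ‖exp B‖ = ‖(exp ((h:ℂ) • B)) ^ n‖ := by rw [hpow]
      _ ≤ (1 + C * h^2) ^ n := hnn
      _ ≤ Real.exp (C * h) := hee
  have hnorm : ‖exp B‖ ≤ 1 := by
    have htend : Filter.Tendsto (fun n : ℕ => Real.exp (C * (n:ℝ)⁻¹))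
        Filter.atTop (nhds 1) := by
      have h1 : Filter.Tendsto (fun n : ℕ => C * (n:ℝ)⁻¹) Filter.atTop (nhds 0) := by
        simpa using (tendsto_const_nhds (x := C)).mul tendsto_inv_atTop_nhds_zero_nat
      have := (Real.continuous_exp.tendsto 0).comp h1
      simpa [Function.comp_def] using this
    refine ge_of_tendsto htend ?_
    filter_upwards [Filter.eventually_ge_atTop (⌈2*(a+1)⌉₊ + 1)] with n hn
    have hn1 : 1 ≤ n := by
      have : 1 ≤ ⌈2*(a+1)⌉₊ + 1 := by omega
      omega
    have hn0 : (0:ℝ) < (n:ℝ) := by exact_mod_cast hn1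
    have hge : 2*(a+1) ≤ (n:ℝ) := by
      calc 2*(a+1) ≤ (⌈2*(a+1)⌉₊ : ℝ) := Nat.le_ceil _
        _ ≤ (n:ℝ) := by exact_mod_cast le_trans (Nat.le_succ _) hn
    have hsmall : ((n:ℝ))⁻¹ * (a+1) ≤ 1/2 := by
      rw [inv_mul_le_iff₀ hn0]
      nlinarith
    exact claim2 n hn1 hsmall
  exact le_trans (rowle _ i) hnorm

end DecoherenceAux
set_option maxHeartbeats 2000000

/-- For `A = Γ + iW` with `Γ` a rate matrix (nonnegative off-diagonal entries and
zero column sums) and `W` real diagonal, and `y₀` a probability vector, the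
decoherence function `∑ⱼ [e^{At} y₀]ⱼ` has modulus at most `1` for all `t ≥ 0`. -/
theorem decoherence_modulus_le_one {M : ℕ}
    (Γ : Matrix (Fin M) (Fin M) ℝ)
    (hΓoff : ∀ j k, j ≠ k → 0 ≤ Γ j k)
    (hΓcol : ∀ k, ∑ j, Γ j k = 0)
    (w : Fin M → ℝ)
    (y0 : Fin M → ℝ) (hy0 : ∀ j, 0 ≤ y0 j) (hy0sum : ∑ j, y0 j = 1)
    (t : ℝ) (ht : 0 ≤ t) :
    ‖∑ j, ((NormedSpace.exp
        (t • ((Γ.map Complex.ofReal) +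
          Complex.I • Matrix.diagonal fun j => (w j : ℂ)))).mulVec
        (fun j => (y0 j : ℂ))) j‖ ≤ 1 := by
  set A : Matrix (Fin M) (Fin M) ℂ :=
    t • ((Γ.map Complex.ofReal) + Complex.I • Matrix.diagonal fun j => (w j : ℂ)) with hA
  have hAentry : ∀ j k, A j k = (t * Γ j k : ℝ) + (if j = k then (t * w j : ℝ) else 0) * Complex.I := by
    intro j k
    rw [hA]
    simp only [Matrix.smul_apply, Matrix.add_apply, Matrix.map_apply, Matrix.smul_apply,
      Matrix.diagonal_apply, smul_eq_mul]
    by_cases hjk : j = k <;> simp [hjk, Complex.real_smul] <;> push_cast <;> ring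
  -- apply key lemma to Aᵀ
  have hkey : ∀ k, ∑ j, ‖(NormedSpace.exp A) j k‖ ≤ 1 := by
    intro k
    have h1 := DecoherenceAux.key Aᵀ (fun i j hij => by
        rw [Matrix.transpose_apply, hAentry j i]
        constructor
        · simp [if_neg (Ne.symm hij)]
        · simp [if_neg (Ne.symm hij)]
          exact mul_nonneg ht (hΓoff j i (Ne.symm hij)))
      (fun i => by
        have : ∀ j, (Aᵀ i j).re = t * Γ j i := by
          intro j
          rw [Matrix.transpose_apply, hAentry j i]
          by_cases hji : j = i <;> simp [hji]
        simp only [this, ← Finset.mul_sum, hΓcol i, mul_zero]) k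
    rw [Matrix.exp_transpose A] at h1
    simpa using h1
  calc ‖∑ j, ((NormedSpace.exp A).mulVec (fun j => (y0 j : ℂ))) j‖
      ≤ ∑ j, ‖((NormedSpace.exp A).mulVec (fun j => (y0 j : ℂ))) j‖ :=
        norm_sum_le _ _
    _ ≤ ∑ j, ∑ k, ‖(NormedSpace.exp A) j k‖ * y0 k := by
        refine Finset.sum_le_sum fun j _ => ?_
        rw [Matrix.mulVec, dotProduct]
        calc ‖∑ k, (NormedSpace.exp A) j k * (y0 k : ℂ)‖
            ≤ ∑ k, ‖(NormedSpace.exp A) j k * (y0 k : ℂ)‖ :=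
              norm_sum_le _ _
          _ = ∑ k, ‖(NormedSpace.exp A) j k‖ * y0 k := by
              refine Finset.sum_congr rfl fun k _ => ?_
              rw [norm_mul, Complex.norm_real, Real.norm_eq_abs, abs_of_nonneg (hy0 k)]
    _ = ∑ k, (∑ j, ‖(NormedSpace.exp A) j k‖) * y0 k := by
        rw [Finset.sum_comm]
        refine Finset.sum_congr rfl fun k _ => ?_
        rw [Finset.sum_mul]
    _ ≤ ∑ k, 1 * y0 k := by
        refine Finset.sum_le_sum fun k _ => ?_
        exact mul_le_mul_of_nonneg_right (hkey k) (hy0 k)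
    _ = 1 := by simp [hy0sum]
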